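/- Let (Γ,⊑) be an extended modular complex and p,u,q vertices. (i) If b is a gate of q at L^+_p and (p,b,u,q) is a shortest subpath, then b is a gate of u at L^+_p. (ii) If a is a gate of q at L^-_p and (p,a,u,q) is a shortest subpath, then a is a gate of u at L^-_p. (iii) If a is a gate of q at L^-_p, b is a gate of q at L^+_p, m is a median of a,b,q, and (p,m,u,q) is a shortest subpath, then a is a gate of u at L^-_p, b is a gate of u at L^+_p, and m is a median of a,b,u. -/

import Mathlib

namespace ZeroExt

variable {V : Type*}

/-- The metric interval `I(x,y)` in a graph. -/
def interval (G : SimpleGraph V) (x y : V) : Set V :=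
  {z | G.dist x z + G.dist z y = G.dist x y}

/-- `m` is a median of `x, y, z`. -/
def IsMedian (G : SimpleGraph V) (x y z m : V) : Prop :=
  m ∈ interval G x y ∧ m ∈ interval G y z ∧ m ∈ interval G x z

/-- A graph is modular if every triple of vertices has a median. -/
def Modular (G : SimpleGraph V) : Prop :=
  ∀ x y z : V, ∃ m : V, IsMedian G x y z m

/-- `(a,b,c)` is a shortest subpath. -/
def ShortestTriple (G : SimpleGraph V) (a b c : V) : Prop :=
  G.dist a b + G.dist b c = G.dist a c

/-- `(a,b,c,d)` is a shortest subpath. -/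
def ShortestQuad (G : SimpleGraph V) (a b c d : V) : Prop :=
  G.dist a b + G.dist b c + G.dist c d = G.dist a d

/-- `(x1,x2,x3,x4)` is an isometric rectangle. -/
def IsoRect (G : SimpleGraph V) (x1 x2 x3 x4 : V) : Prop :=
  ShortestTriple G x4 x1 x2 ∧ ShortestTriple G x1 x2 x3 ∧
    ShortestTriple G x2 x3 x4 ∧ ShortestTriple G x3 x4 x1

/-- A set of vertices is convex if it contains the interval of each pair of its points. -/
def Convex (G : SimpleGraph V) (U : Set V) : Prop :=
  ∀ x ∈ U, ∀ y ∈ U, interval G x y ⊆ U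

/-- `g` is a gate of `q` at `U`. -/
def IsGate (G : SimpleGraph V) (U : Set V) (q g : V) : Prop :=
  g ∈ U ∧ ∀ u ∈ U, G.dist q u = G.dist q g + G.dist g u

/-- A 4-cycle in a graph. -/
def IsFourCycle (G : SimpleGraph V) (x1 x2 x3 x4 : V) : Prop :=
  G.Adj x1 x2 ∧ G.Adj x2 x3 ∧ G.Adj x3 x4 ∧ G.Adj x4 x1 ∧ x1 ≠ x3 ∧ x2 ≠ x4

/-- A modular complex: a finite connected modular graph together with an
acyclic admissible edge orientation. -/
structure ModularComplex (V : Type*) [Fintype V] where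
  G : SimpleGraph V
  connected : G.Connected
  modular : Modular G
  ori : V → V → Prop
  ori_adj : ∀ {x y : V}, ori x y → G.Adj x y
  ori_total : ∀ {x y : V}, G.Adj x y → ori x y ∨ ori y x
  acyclic : ∀ {x y : V}, Relation.ReflTransGen ori x y → Relation.ReflTransGen ori y x → x = y
  admissible : ∀ {x1 x2 x3 x4 : V}, IsFourCycle G x1 x2 x3 x4 → ori x1 x2 → ori x4 x3

variable [Fintype V]

/-- The partial order `⪯` induced by the orientation. -/
def ModularComplex.le (Γ : ModularComplex V) : V → V → Prop :=
  Relation.ReflTransGen Γ.ori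

/-- The order interval `[p,q]`. -/
def ModularComplex.Icc (Γ : ModularComplex V) (p q : V) : Set V :=
  {x | Γ.le p x ∧ Γ.le x q}

/-- `m` is the greatest lower bound `p ∧ q`. -/
def ModularComplex.IsMeet (Γ : ModularComplex V) (p q m : V) : Prop :=
  Γ.le m p ∧ Γ.le m q ∧ ∀ x : V, Γ.le x p → Γ.le x q → Γ.le x m

/-- `j` is the least upper bound `p ∨ q`. -/
def ModularComplex.IsJoin (Γ : ModularComplex V) (p q j : V) : Prop :=
  Γ.le p j ∧ Γ.le q j ∧ ∀ x : V, Γ.le p x → Γ.le q x → Γ.le j x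

/-- `(p,q)` is a Boolean pair. -/
def ModularComplex.BooleanPair (Γ : ModularComplex V) (p q : V) : Prop :=
  ∃ (k : ℕ) (φ : Finset (Fin k) → V), Function.Injective φ ∧
    φ ∅ = p ∧ φ Finset.univ = q ∧
    ∀ (S : Finset (Fin k)) (i : Fin k), i ∉ S → Γ.ori (φ S) (φ (insert i S))

/-- An extended modular complex: a modular complex with an admissible relation `⊑`. -/
structure ExtendedModularComplex (V : Type*) [Fintype V] extends ModularComplex V where
  sq : V → V → Prop
  sq_le : ∀ {p q : V}, sq p q → toModularComplex.le p q
  sq_refl : ∀ p : V, sq p p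
  sq_edge : ∀ {p q : V}, ori p q → sq p q
  sq_interval : ∀ {p q a b : V}, sq p q → toModularComplex.le a b →
    a ∈ toModularComplex.Icc p q → b ∈ toModularComplex.Icc p q → sq a b
  sq_join : ∀ {p q1 q2 j : V}, sq p q1 → sq p q2 → toModularComplex.IsJoin q1 q2 j → sq p j
  sq_meet : ∀ {p1 p2 q m : V}, sq p1 q → sq p2 q → toModularComplex.IsMeet p1 p2 m → sq m q

/-- `L^+_p = {x : p ⊑ x}`. -/
def ExtendedModularComplex.Lpos (Γ : ExtendedModularComplex V) (p : V) : Set V :=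
  {x | Γ.sq p x}

/-- `L^-_p = {x : x ⊑ p}`. -/
def ExtendedModularComplex.Lneg (Γ : ExtendedModularComplex V) (p : V) : Set V :=
  {x | Γ.sq x p}

/-- `p, q` are ◇-neighbors. -/
def ExtendedModularComplex.DiamondNb (Γ : ExtendedModularComplex V) (p q : V) : Prop :=
  ∃ a b : V, Γ.sq a b ∧ p ∈ Γ.Icc a b ∧ q ∈ Γ.Icc a b

/-- The thickening `Δ(Γ)`. -/
def ExtendedModularComplex.thick (Γ : ExtendedModularComplex V) : SimpleGraph V where
  Adj p q := p ≠ q ∧ Γ.DiamondNb p q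
  symm := by
    constructor
    rintro p q ⟨hne, a, b, hab, hp, hq⟩
    exact ⟨hne.symm, a, b, hab, hq, hp⟩
  loopless := by constructor; rintro p ⟨hne, -⟩; exact hne rfl


lemma gate_of_quad {G : SimpleGraph V} (hc : G.Connected) {U : Set V} {p u q g : V}
    (hp : p ∈ U) (hg : IsGate G U q g) (hq : ShortestQuad G p g u q) : IsGate G U u g := by
  obtain ⟨hgU, hgate⟩ := hg
  refine ⟨hgU, fun x hx => ?_⟩
  have h1 := hgate p hp
  have h2 := hgate x hx
  have t1 : G.dist q x ≤ G.dist q u + G.dist u x := hc.dist_triangle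
  have t2 : G.dist u x ≤ G.dist u g + G.dist g x := hc.dist_triangle
  have t3 : G.dist p q ≤ G.dist p g + G.dist g q := hc.dist_triangle
  have t4 : G.dist g q ≤ G.dist g u + G.dist u q := hc.dist_triangle
  have c1 : G.dist q p = G.dist p q := G.dist_comm
  have c2 : G.dist g p = G.dist p g := G.dist_comm
  have c3 : G.dist q g = G.dist g q := G.dist_comm
  have c4 : G.dist u g = G.dist g u := G.dist_comm
  have c5 : G.dist u q = G.dist q u := G.dist_comm
  unfold ShortestQuad at hq
  omega

/-- The operations `▷, ◁, ◇` are preserved along shortest subpaths. -/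
theorem diamond_ops_preserved (Γ : ExtendedModularComplex V) :
    (∀ p u q b : V, IsGate Γ.G (Γ.Lpos p) q b → ShortestQuad Γ.G p b u q →
      IsGate Γ.G (Γ.Lpos p) u b) ∧
    (∀ p u q a : V, IsGate Γ.G (Γ.Lneg p) q a → ShortestQuad Γ.G p a u q →
      IsGate Γ.G (Γ.Lneg p) u a) ∧
    (∀ p u q a b m : V, IsGate Γ.G (Γ.Lneg p) q a → IsGate Γ.G (Γ.Lpos p) q b →
      IsMedian Γ.G a b q m → ShortestQuad Γ.G p m u q →
      IsGate Γ.G (Γ.Lneg p) u a ∧ IsGate Γ.G (Γ.Lpos p) u b ∧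
        IsMedian Γ.G a b u m) := by
  have hc : Γ.G.Connected := Γ.connected
  refine ⟨fun p u q b hb hq => gate_of_quad hc (Γ.sq_refl p) hb hq,
    fun p u q a ha hq => gate_of_quad hc (Γ.sq_refl p) ha hq,
    fun p u q a b m ha hb hm hq => ?_⟩
  obtain ⟨hab, hbq, haq⟩ := hm
  have hab : Γ.G.dist a m + Γ.G.dist m b = Γ.G.dist a b := hab
  have hbq : Γ.G.dist b m + Γ.G.dist m q = Γ.G.dist b q := hbq
  have haq : Γ.G.dist a m + Γ.G.dist m q = Γ.G.dist a q := haq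
  unfold ShortestQuad at hq
  -- u is between m and q
  have t1 : Γ.G.dist p q ≤ Γ.G.dist p m + Γ.G.dist m q := hc.dist_triangle
  have t2 : Γ.G.dist m q ≤ Γ.G.dist m u + Γ.G.dist u q := hc.dist_triangle
  have hmq : Γ.G.dist m q = Γ.G.dist m u + Γ.G.dist u q := by omega
  -- squeeze for a
  have t3 : Γ.G.dist a u ≤ Γ.G.dist a m + Γ.G.dist m u := hc.dist_triangle
  have t4 : Γ.G.dist a q ≤ Γ.G.dist a u + Γ.G.dist u q := hc.dist_triangle
  have hau : Γ.G.dist a u = Γ.G.dist a m + Γ.G.dist m u := by omega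
  have hauq : Γ.G.dist a u + Γ.G.dist u q = Γ.G.dist a q := by omega
  -- squeeze for b
  have t5 : Γ.G.dist b u ≤ Γ.G.dist b m + Γ.G.dist m u := hc.dist_triangle
  have t6 : Γ.G.dist b q ≤ Γ.G.dist b u + Γ.G.dist u q := hc.dist_triangle
  have hbu : Γ.G.dist b u = Γ.G.dist b m + Γ.G.dist m u := by omega
  have hbuq : Γ.G.dist b u + Γ.G.dist u q = Γ.G.dist b q := by omega
  -- shortest quads through a and b
  have hpa := ha.2 p (Γ.sq_refl p)
  have hpb := hb.2 p (Γ.sq_refl p)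
  have c1 : Γ.G.dist q p = Γ.G.dist p q := Γ.G.dist_comm
  have c2 : Γ.G.dist q a = Γ.G.dist a q := Γ.G.dist_comm
  have c3 : Γ.G.dist a p = Γ.G.dist p a := Γ.G.dist_comm
  have c4 : Γ.G.dist q b = Γ.G.dist b q := Γ.G.dist_comm
  have c5 : Γ.G.dist b p = Γ.G.dist p b := Γ.G.dist_comm
  have t7 : Γ.G.dist p q ≤ Γ.G.dist p a + Γ.G.dist a q := hc.dist_triangle
  have t8 : Γ.G.dist p q ≤ Γ.G.dist p b + Γ.G.dist b q := hc.dist_triangle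
  have hqa : ShortestQuad Γ.G p a u q := by unfold ShortestQuad; omega
  have hqb : ShortestQuad Γ.G p b u q := by unfold ShortestQuad; omega
  refine ⟨gate_of_quad hc (Γ.sq_refl p) ha hqa, gate_of_quad hc (Γ.sq_refl p) hb hqb,
    hab, ?_, ?_⟩
  · show Γ.G.dist b m + Γ.G.dist m u = Γ.G.dist b u
    omega
  · show Γ.G.dist a m + Γ.G.dist m u = Γ.G.dist a u
    omega

end ZeroExt
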